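/- Let x = (x_n) be a summable positive sequence with cardinal function f. If for every y > 0, the range of the cardinal function of the sequence obtained by prepending y to x equals the range of f, then rng(f) ⊇ ℕ, i.e., every positive integer is attained by f. -/

import Mathlib

open Set

/-- The achievement set of a sequence: all subsums. -/
noncomputable def achSet (x : ℕ → ℝ) : Set ℝ :=
  {t | ∃ S : Set ℕ, ∑' n : S, x n = t}

/-- The cardinal function: the number of representations of `t` as a subsum. -/
noncomputable def cardFun (x : ℕ → ℝ) (t : ℝ) : Cardinal :=
  Cardinal.mk {S : Set ℕ // ∑' n : S, x n = t}

/-- The tail sum `r_k = ∑_{n > k} x n`. -/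
noncomputable def tailSum (x : ℕ → ℝ) (k : ℕ) : ℝ := ∑' n, x (k + 1 + n)

/-- Prepending a term to a sequence. -/
def prepend (y : ℝ) (x : ℕ → ℝ) : ℕ → ℝ := fun n =>
  match n with
  | 0 => y
  | Nat.succ m => x m

lemma summable_prepend (y : ℝ) {x : ℕ → ℝ} (hx : Summable x) :
    Summable (prepend y x) := by
  have : Summable (fun n => prepend y x (n + 1)) := by
    simpa [prepend] using hx
  exact (summable_nat_add_iff 1).mp this

-- Key splitting lemma for sums over subsets of a prepended sequence.
open Classical in
lemma sum_prepend (y : ℝ) {x : ℕ → ℝ} (hx : Summable x) (S : Set ℕ) :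
    ∑' n : S, prepend y x n =
      (if (0 : ℕ) ∈ S then y else 0) + ∑' n : {m : ℕ | m + 1 ∈ S}, x n := by
  classical
  have hps : Summable (prepend y x) := summable_prepend y hx
  rw [tsum_subtype S (prepend y x), tsum_subtype {m : ℕ | m + 1 ∈ S} x]
  rw [Summable.tsum_eq_zero_add (hps.indicator S)]
  have h0 : S.indicator (prepend y x) 0 = if (0 : ℕ) ∈ S then y else 0 := by
    simp [Set.indicator_apply, prepend]
  have h1 : ∀ n, S.indicator (prepend y x) (n + 1)
      = ({m : ℕ | m + 1 ∈ S}).indicator x n := fun n => by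
    by_cases h : n + 1 ∈ S <;> simp [Set.indicator_apply, h, prepend]
  rw [h0, tsum_congr h1]

lemma tsum_subtype_pos {x : ℕ → ℝ} (hpos : ∀ n, 0 < x n) (hx : Summable x)
    {S : Set ℕ} {m : ℕ} (hm : m ∈ S) : 0 < ∑' n : S, x n :=
  Summable.tsum_pos (hx.subtype S) (fun i => (hpos i).le) ⟨m, hm⟩ (hpos m)

lemma set_empty_of_tsum_zero {x : ℕ → ℝ} (hpos : ∀ n, 0 < x n) (hx : Summable x)
    {S : Set ℕ} (h : ∑' n : S, x n = 0) : S = ∅ := by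
  by_contra hS
  obtain ⟨m, hm⟩ := Set.nonempty_iff_ne_empty.mpr hS
  exact absurd h (ne_of_gt (tsum_subtype_pos hpos hx hm))

lemma set_univ_of_tsum_total {x : ℕ → ℝ} (hpos : ∀ n, 0 < x n) (hx : Summable x)
    {S : Set ℕ} (h : ∑' n : S, x n = ∑' n, x n) : S = Set.univ := by
  by_contra hS
  obtain ⟨m, hm⟩ : Sᶜ.Nonempty := by
    rw [Set.nonempty_compl]; exact hS
  have hsplit : ∑' n, S.indicator x n + ∑' n, Sᶜ.indicator x n = ∑' n, x n := by
    rw [← Summable.tsum_add (hx.indicator S) (hx.indicator Sᶜ)]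
    exact tsum_congr fun n => by
      by_cases hn : n ∈ S <;> simp [Set.indicator_apply, hn]
  have hc : 0 < ∑' n : (Sᶜ : Set ℕ), x n := tsum_subtype_pos hpos hx hm
  rw [tsum_subtype S x] at h
  rw [tsum_subtype (Sᶜ) x] at hc
  linarith

lemma prepend_singleton_sum {x : ℕ → ℝ} (hx : Summable x) (t : ℝ) :
    ∑' n : ({0} : Set ℕ), prepend t x n = t := by
  classical
  rw [sum_prepend t hx]
  have hT : {m : ℕ | m + 1 ∈ ({0} : Set ℕ)} = ∅ := by
    ext m; simp
  rw [hT]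
  simp [tsum_empty]

lemma prepend_succ_image_sum {x : ℕ → ℝ} (hx : Summable x) (t : ℝ) (T : Set ℕ) :
    ∑' n : (Nat.succ '' T : Set ℕ), prepend t x n = ∑' n : T, x n := by
  classical
  rw [sum_prepend t hx]
  have h0 : (0 : ℕ) ∉ (Nat.succ '' T : Set ℕ) := by
    rintro ⟨m, _, hm⟩; exact Nat.succ_ne_zero m hm
  have hT : {m : ℕ | m + 1 ∈ (Nat.succ '' T : Set ℕ)} = T := by
    ext m
    simp [Nat.succ_eq_add_one]
  rw [if_neg h0, hT, zero_add]

open Classical in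
noncomputable def stepFwd (x : ℕ → ℝ) (hx : Summable x) (t : ℝ) :
    {S : Set ℕ // ∑' n : S, prepend t x n = t} →
      Option {T : Set ℕ // ∑' n : T, x n = t} := fun S =>
  if h : (0 : ℕ) ∈ S.1 then none else some ⟨{m : ℕ | m + 1 ∈ S.1}, by
    have hk := sum_prepend t hx S.1
    rw [S.2, if_neg h, zero_add] at hk
    exact hk.symm⟩

noncomputable def stepBwd (x : ℕ → ℝ) (hx : Summable x) (t : ℝ) :
    Option {T : Set ℕ // ∑' n : T, x n = t} →
      {S : Set ℕ // ∑' n : S, prepend t x n = t} := fun o =>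
  o.elim ⟨{0}, prepend_singleton_sum hx t⟩
    (fun T => ⟨Nat.succ '' T.1, by rw [prepend_succ_image_sum hx t T.1, T.2]⟩)

open Classical in
lemma card_step {x : ℕ → ℝ} (hpos : ∀ n, 0 < x n) (hx : Summable x) {t : ℝ}
    (ht : 0 < t) : cardFun (prepend t x) t = cardFun x t + 1 := by
  classical
  set β := {T : Set ℕ // ∑' n : T, x n = t} with hβ
  have e : {S : Set ℕ // ∑' n : S, prepend t x n = t} ≃ Option β := by
    refine ⟨stepFwd x hx t, stepBwd x hx t, ?_, ?_⟩
    · rintro ⟨S, hS⟩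
      by_cases h : (0 : ℕ) ∈ S
      · have hk := sum_prepend t hx S
        rw [hS, if_pos h] at hk
        have hz : ∑' n : {m : ℕ | m + 1 ∈ S}, x n = 0 := by linarith
        have hemp := set_empty_of_tsum_zero hpos hx hz
        have hSeq : S = {0} := by
          ext n
          cases n with
          | zero => simp [h]
          | succ m =>
            simp only [Set.mem_singleton_iff]
            constructor
            · intro hm
              exact absurd (Set.eq_empty_iff_forall_notMem.mp hemp m hm) (by simp [hm])
            · intro hm; exact absurd hm (Nat.succ_ne_zero m)
        unfold stepFwd stepBwd
        rw [dif_pos h]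
        exact Subtype.ext hSeq.symm
      · unfold stepFwd stepBwd
        rw [dif_neg h]
        refine Subtype.ext ?_
        show Nat.succ '' {m : ℕ | m + 1 ∈ S} = S
        ext n
        cases n with
        | zero => simp [h]
        | succ m => simp [Nat.succ_eq_add_one]
    · rintro (_ | ⟨T, hT⟩)
      · unfold stepFwd stepBwd
        simp only [Option.elim]
        exact dif_pos (by simp : (0 : ℕ) ∈ ({0} : Set ℕ))
      · unfold stepFwd stepBwd
        simp only [Option.elim]
        have h0 : (0 : ℕ) ∉ (Nat.succ '' T : Set ℕ) := by
          rintro ⟨m, _, hm⟩; exact Nat.succ_ne_zero m hm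
        refine (dif_neg h0).trans ?_
        congr 1
        refine Subtype.ext ?_
        show {m : ℕ | m + 1 ∈ (Nat.succ '' T : Set ℕ)} = T
        ext m
        simp [Nat.succ_eq_add_one]
  calc cardFun (prepend t x) t = Cardinal.mk (Option β) := Cardinal.mk_congr e
    _ = cardFun x t + 1 := Cardinal.mk_option

lemma card_total {x : ℕ → ℝ} (hpos : ∀ n, 0 < x n) (hx : Summable x) :
    cardFun x (∑' n, x n) = 1 := by
  haveI : Nonempty {S : Set ℕ // ∑' n : S, x n = ∑' n, x n} :=
    ⟨⟨Set.univ, tsum_univ x⟩⟩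
  haveI : Subsingleton {S : Set ℕ // ∑' n : S, x n = ∑' n, x n} := by
    constructor
    rintro ⟨S, hS⟩ ⟨S', hS'⟩
    refine Subtype.ext ?_
    show S = S'
    rw [set_univ_of_tsum_total hpos hx hS, set_univ_of_tsum_total hpos hx hS']
  exact Cardinal.mk_eq_one _

lemma card_zero {x : ℕ → ℝ} (hpos : ∀ n, 0 < x n) (hx : Summable x) :
    cardFun x 0 = 1 := by
  haveI : Nonempty {S : Set ℕ // ∑' n : S, x n = 0} := ⟨⟨∅, by simp [tsum_empty]⟩⟩
  haveI : Subsingleton {S : Set ℕ // ∑' n : S, x n = 0} := by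
    constructor
    rintro ⟨S, hS⟩ ⟨S', hS'⟩
    refine Subtype.ext ?_
    show S = S'
    rw [set_empty_of_tsum_zero hpos hx hS, set_empty_of_tsum_zero hpos hx hS']
  exact Cardinal.mk_eq_one _

theorem stmt13 (x : ℕ → ℝ) (hpos : ∀ n, 0 < x n) (hsum : Summable x)
    (hCis : ∀ y : ℝ, 0 < y →
      cardFun (prepend y x) '' achSet (prepend y x) = cardFun x '' achSet x) :
    ∀ n : ℕ, 0 < n → (n : Cardinal) ∈ cardFun x '' achSet x := by
  have main : ∀ n : ℕ, ∃ t : ℝ, 0 < t ∧ t ∈ achSet x ∧ cardFun x t = (n + 1 : ℕ) := by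
    intro n
    induction n with
    | zero =>
      refine ⟨∑' n, x n, Summable.tsum_pos hsum (fun i => (hpos i).le) 0 (hpos 0),
        ⟨Set.univ, tsum_univ x⟩, ?_⟩
      rw [card_total hpos hsum]; norm_num
    | succ n ih =>
      obtain ⟨t, htpos, htach, htcard⟩ := ih
      have himg := hCis t htpos
      have hmem : ((n + 2 : ℕ) : Cardinal) ∈ cardFun (prepend t x) '' achSet (prepend t x) := by
        refine ⟨t, ⟨{0}, prepend_singleton_sum hsum t⟩, ?_⟩
        rw [card_step hpos hsum htpos, htcard]
        push_cast
        ring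
      rw [himg] at hmem
      obtain ⟨t', ht'ach, ht'card⟩ := hmem
      refine ⟨t', ?_, ht'ach, ht'card⟩
      -- t' ≥ 0
      obtain ⟨S, hS⟩ := ht'ach
      have hnn : 0 ≤ t' := hS ▸ tsum_nonneg (fun i => (hpos i).le)
      rcases hnn.lt_or_eq with h | h
      · exact h
      · exfalso
        rw [← h, card_zero hpos hsum] at ht'card
        have : ((1 : ℕ) : Cardinal) = ((n + 2 : ℕ) : Cardinal) := by
          simpa using ht'card
        have := Nat.cast_injective this
        omega
  intro n hn
  obtain ⟨k, rfl⟩ : ∃ k, n = k + 1 := ⟨n - 1, by omega⟩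
  obtain ⟨t, _, htach, htcard⟩ := main k
  exact ⟨t, htach, htcard⟩
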